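/- Let z ∈ ℝ^m be a vector of logits and let η ∈ ℝ^m be a noise vector with ‖η‖₁ ≤ ε. Define p := softmax(z) and q := softmax(z + η), where softmax(z)_i := exp(z_i) / Σ_{j=1}^m exp(z_j). Then ‖q − p‖₁ ≤ ε/2. -/

import Mathlib

section SoftmaxAux
open Finset

lemma mad_le {m : ℕ} (w a : Fin m → ℝ) (hw : ∀ i, 0 ≤ w i) (hw1 : ∑ i, w i = 1) :
    ∑ i, |w i * (a i - ∑ j, w j * a j)| ≤ (∑ i, |a i|) / 2 := by
  set μ := ∑ j, w j * a j with hμ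
  set g : Fin m → ℝ := fun i => w i * (a i - μ) with hg
  have hsumg : ∑ i, g i = 0 := by
    simp only [hg, mul_sub]
    rw [Finset.sum_sub_distrib, ← Finset.sum_mul, hw1]
    simp [hμ]
  set A : Finset (Fin m) := Finset.univ.filter (fun i => 0 ≤ g i) with hA
  have hsplit : ∀ (h : Fin m → ℝ), ∑ i, h i = ∑ i ∈ A, h i + ∑ i ∈ Aᶜ, h i := by
    intro h
    rw [Finset.sum_add_sum_compl]
  have habs : ∑ i, |g i| = 2 * ∑ i ∈ A, g i := by
    rw [hsplit (fun i => |g i|)]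
    have h1 : ∑ i ∈ A, |g i| = ∑ i ∈ A, g i := by
      apply Finset.sum_congr rfl
      intro i hi
      rw [hA, Finset.mem_filter] at hi
      exact abs_of_nonneg hi.2
    have h2 : ∑ i ∈ Aᶜ, |g i| = -∑ i ∈ Aᶜ, g i := by
      rw [← Finset.sum_neg_distrib]
      apply Finset.sum_congr rfl
      intro i hi
      rw [hA, Finset.mem_compl, Finset.mem_filter] at hi
      push_neg at hi
      exact abs_of_neg (hi (Finset.mem_univ i))
    have h3 : ∑ i ∈ A, g i + ∑ i ∈ Aᶜ, g i = 0 := by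
      rw [← hsplit g]; exact hsumg
    rw [h1, h2]; linarith
  set Q := ∑ i ∈ A, w i with hQ
  have hQ0 : 0 ≤ Q := Finset.sum_nonneg (fun i _ => hw i)
  have hQ1 : Q ≤ 1 := by
    rw [← hw1]
    exact Finset.sum_le_sum_of_subset_of_nonneg (Finset.subset_univ A) (fun i _ _ => hw i)
  set SA := ∑ i ∈ A, w i * a i with hSA
  set SB := ∑ i ∈ Aᶜ, w i * a i with hSB
  set TA := ∑ i ∈ A, |a i| with hTA
  set TB := ∑ i ∈ Aᶜ, |a i| with hTB
  have hμsplit : μ = SA + SB := hsplit (fun i => w i * a i)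
  have hT : ∑ i, |a i| = TA + TB := hsplit (fun i => |a i|)
  have hTA0 : 0 ≤ TA := Finset.sum_nonneg (fun i _ => abs_nonneg _)
  have hTB0 : 0 ≤ TB := Finset.sum_nonneg (fun i _ => abs_nonneg _)
  have hgA : ∑ i ∈ A, g i = SA - Q * μ := by
    simp only [hg, mul_sub]
    rw [Finset.sum_sub_distrib, ← Finset.sum_mul]
  have hSAle : SA ≤ Q * TA := by
    rw [hSA, hTA, Finset.mul_sum]
    apply Finset.sum_le_sum
    intro i hi
    have hwiQ : w i ≤ Q := Finset.single_le_sum (fun j _ => hw j) hi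
    calc w i * a i ≤ w i * |a i| := mul_le_mul_of_nonneg_left (le_abs_self _) (hw i)
      _ ≤ Q * |a i| := mul_le_mul_of_nonneg_right hwiQ (abs_nonneg _)
  have hSBle : -SB ≤ (1 - Q) * TB := by
    have hQc : ∑ i ∈ Aᶜ, w i = 1 - Q := by
      have := hsplit w
      rw [hw1] at this
      linarith
    rw [← hQc, hSB, hTB, Finset.mul_sum, ← Finset.sum_neg_distrib]
    apply Finset.sum_le_sum
    intro i hi
    have hwiQ : w i ≤ ∑ j ∈ Aᶜ, w j := Finset.single_le_sum (fun j _ => hw j) hi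
    calc -(w i * a i) = w i * (-a i) := by ring
      _ ≤ w i * |a i| := mul_le_mul_of_nonneg_left (neg_le_abs _) (hw i)
      _ ≤ (∑ j ∈ Aᶜ, w j) * |a i| := mul_le_mul_of_nonneg_right hwiQ (abs_nonneg _)
  -- ∑_A g = (1-Q) SA - Q SB ≤ Q(1-Q)(TA+TB) ≤ (TA+TB)/4
  have key : ∑ i ∈ A, g i ≤ (TA + TB) / 4 := by
    have h1 : ∑ i ∈ A, g i = (1 - Q) * SA - Q * SB := by
      rw [hgA, hμsplit]; ring
    have h2 : (1 - Q) * SA ≤ (1 - Q) * (Q * TA) :=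
      mul_le_mul_of_nonneg_left hSAle (by linarith)
    have h3 : Q * (-SB) ≤ Q * ((1 - Q) * TB) :=
      mul_le_mul_of_nonneg_left hSBle hQ0
    nlinarith [sq_nonneg (Q - 1/2), mul_nonneg hTA0 hTB0]
  rw [habs, hT]
  linarith

end SoftmaxAux

/-- Softmax stability. If `‖η‖₁ ≤ ε`, `p = softmax z` and
`q = softmax (z + η)`, then `‖q − p‖₁ ≤ ε/2`. -/
theorem softmax_stability {m : ℕ}
    (z η : Fin m → ℝ) (ε : ℝ)
    (hη : ∑ i, |η i| ≤ ε)
    (p q : Fin m → ℝ)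
    (hp : ∀ i, p i = Real.exp (z i) / ∑ j, Real.exp (z j))
    (hq : ∀ i, q i = Real.exp (z i + η i) / ∑ j, Real.exp (z j + η j)) :
    ∑ i, |q i - p i| ≤ ε / 2 := by
  rcases Nat.eq_zero_or_pos m with hm | hm
  · subst hm
    simp only [Finset.univ_eq_empty, Finset.sum_empty] at hη ⊢
    linarith
  haveI : Nonempty (Fin m) := ⟨⟨0, hm⟩⟩
  set S : ℝ → ℝ := fun t => ∑ j, Real.exp (z j + t * η j) with hSdef
  have hS : ∀ t, 0 < S t := fun t =>
    Finset.sum_pos (fun j _ => Real.exp_pos _) Finset.univ_nonempty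
  set f : Fin m → ℝ → ℝ := fun i t => Real.exp (z i + t * η i) / S t with hfdef
  set g : Fin m → ℝ → ℝ := fun i t => f i t * (η i - ∑ j, f j t * η j) with hgdef
  -- derivative of each component
  have hexp : ∀ (i : Fin m) (t : ℝ), HasDerivAt (fun s => Real.exp (z i + s * η i))
      (Real.exp (z i + t * η i) * η i) t := by
    intro i t
    have h1 : HasDerivAt (fun s : ℝ => z i + s * η i) (η i) t := by
      simpa using ((hasDerivAt_id t).mul_const (η i)).const_add (z i)
    simpa using h1.exp
  have hS' : ∀ t, HasDerivAt S (∑ j, Real.exp (z j + t * η j) * η j) t := by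
    intro t
    exact HasDerivAt.fun_sum (fun j _ => hexp j t)
  have hf' : ∀ (i : Fin m) (t : ℝ), HasDerivAt (f i) (g i t) t := by
    intro i t
    have hd := (hexp i t).div (hS' t) (hS t).ne'
    refine hd.congr_deriv ?_
    have hSne : S t ≠ 0 := (hS t).ne'
    rw [hgdef]
    simp only [hfdef]
    have hsum : ∑ x, Real.exp (z x + t * η x) / S t * η x
        = (∑ j, Real.exp (z j + t * η j) * η j) / S t := by
      rw [Finset.sum_div]; exact Finset.sum_congr rfl (fun x _ => by ring)
    rw [hsum]
    field_simp
  -- ℓ¹ bound on the derivative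
  have hbound : ∀ t : ℝ, ∑ i, |g i t| ≤ ε / 2 := by
    intro t
    have hw : ∀ i, 0 ≤ f i t := fun i => div_nonneg (Real.exp_pos _).le (hS t).le
    have hw1 : ∑ i, f i t = 1 := by
      simp only [hfdef]
      rw [← Finset.sum_div, div_self (hS t).ne']
    have := mad_le (fun i => f i t) η hw hw1
    calc ∑ i, |g i t| ≤ (∑ i, |η i|) / 2 := this
      _ ≤ ε / 2 := by linarith
  -- mean value inequality in PiLp 1
  set E := PiLp 1 (fun _ : Fin m => ℝ) with hE
  let e := PiLp.continuousLinearEquiv 1 ℝ (fun _ : Fin m => ℝ)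
  set F : ℝ → E := fun t => e.symm (fun i => f i t) with hF
  set G : ℝ → E := fun t => e.symm (fun i => g i t) with hG
  have hFd : ∀ t : ℝ, HasDerivAt F (G t) t := by
    intro t
    have : HasDerivAt (fun s => (fun i => f i s : Fin m → ℝ)) (fun i => g i t) t :=
      hasDerivAt_pi.2 (fun i => hf' i t)
    exact (e.symm : (Fin m → ℝ) →L[ℝ] E).hasFDerivAt.comp_hasDerivAt t this
  have hGnorm : ∀ t : ℝ, ‖G t‖ = ∑ i, |g i t| := by
    intro t
    rw [PiLp.norm_eq_sum (by norm_num : 0 < (1 : ENNReal).toReal)]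
    norm_num [Real.norm_eq_abs]
    apply Finset.sum_congr rfl
    intro x _
    rfl
  have key : ‖F 1 - F 0‖ ≤ ε / 2 * (1 - 0) :=
    norm_image_sub_le_of_norm_deriv_le_segment' (a := 0) (b := 1) (f' := G)
      (fun x _ => (hFd x).hasDerivWithinAt)
      (fun x _ => by rw [hGnorm]; exact hbound x)
      1 (Set.right_mem_Icc.2 zero_le_one)
  have hnorm : ‖F 1 - F 0‖ = ∑ i, |q i - p i| := by
    rw [PiLp.norm_eq_sum (by norm_num : 0 < (1 : ENNReal).toReal)]
    simp only [Real.norm_eq_abs]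
    norm_num
    apply Finset.sum_congr rfl
    intro i _
    have h1 : (F 1 - F 0) i = f i 1 - f i 0 := rfl
    rw [h1, hp i, hq i]
    simp [hfdef, hSdef]
  rw [hnorm] at key
  linarith
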